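/- Let q₁,...,q_m be complex numbers and for 0 ≤ j ≤ m set h_j = ∑_{1≤ℓ₁<...<ℓ_j≤m} |q_{ℓ₁}|²···|q_{ℓ_j}|² (with h₀ = 1). Suppose each q_ℓ has |Im q_ℓ| ≥ a > 0. Then for 1 ≤ k ≤ j ≤ m one has h_{m-k} ≥ c·a^{2(j-k)}·h_{m-j}, where c > 0 depends only on m. -/

import Mathlib

open Finset

/-- with `h_j = ∑_{|S|=j} ∏_{ℓ∈S} |q_ℓ|²`, if `|Im q_ℓ| ≥ a > 0` for
all `ℓ`, then `h_{m-k} ≥ c a^{2(j-k)} h_{m-j}` for `1 ≤ k ≤ j ≤ m`, where `c > 0`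
depends only on `m`. -/
theorem stmt_11 (m : ℕ) :
    ∃ c > (0 : ℝ), ∀ (q : Fin m → ℂ) (a : ℝ), 0 < a →
      (∀ ℓ, a ≤ |(q ℓ).im|) →
      ∀ k j : ℕ, 1 ≤ k → k ≤ j → j ≤ m →
        c * a ^ (2 * (j - k)) *
            (∑ S ∈ (Finset.univ : Finset (Fin m)).powersetCard (m - j),
              ∏ ℓ ∈ S, ‖q ℓ‖ ^ 2) ≤
          ∑ S ∈ (Finset.univ : Finset (Fin m)).powersetCard (m - k),
            ∏ ℓ ∈ S, ‖q ℓ‖ ^ 2 := by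
  refine ⟨((2:ℝ)^m)⁻¹, by positivity, ?_⟩
  intro q a ha him k j hk hkj hjm
  set t := m - j with ht
  set s := m - k with hs
  have hts : t ≤ s := Nat.sub_le_sub_left hkj m
  have hsm : s ≤ m := Nat.sub_le m k
  have hst : s - t = j - k := by omega
  -- each |q ℓ|² ≥ a²
  have haq : ∀ ℓ, a ^ 2 ≤ ‖q ℓ‖ ^ 2 := fun ℓ => by
    have h1 : a ≤ ‖q ℓ‖ := (him ℓ).trans (Complex.abs_im_le_norm _)
    exact pow_le_pow_left₀ ha.le h1 2
  -- maximizing T of size t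
  have hne : ((Finset.univ : Finset (Fin m)).powersetCard t).Nonempty :=
    Finset.powersetCard_nonempty.2 (by simp only [Finset.card_univ, Fintype.card_fin]; omega)
  obtain ⟨T, hTmem, hTmax⟩ :=
    Finset.exists_max_image _ (fun T => ∏ ℓ ∈ T, ‖q ℓ‖ ^ 2) hne
  obtain ⟨hTsub, hTcard⟩ := Finset.mem_powersetCard.1 hTmem
  -- extend T to S of size s
  obtain ⟨S, hTS, hSuniv, hScard⟩ :=
    Finset.exists_subsuperset_card_eq (n := s) hTsub (by rw [hTcard]; exact hts)
      (by simp only [Finset.card_univ, Fintype.card_fin]; omega)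
  have hprodnn : ∀ (U : Finset (Fin m)), (0:ℝ) ≤ ∏ ℓ ∈ U, ‖q ℓ‖ ^ 2 :=
    fun U => Finset.prod_nonneg fun ℓ _ => by positivity
  set M : ℝ := ∏ ℓ ∈ T, ‖q ℓ‖ ^ 2 with hM
  -- h_t ≤ 2^m * M
  have hht : (∑ U ∈ (Finset.univ : Finset (Fin m)).powersetCard t,
      ∏ ℓ ∈ U, ‖q ℓ‖ ^ 2) ≤ (2:ℝ)^m * M := by
    calc (∑ U ∈ (Finset.univ : Finset (Fin m)).powersetCard t,
        ∏ ℓ ∈ U, ‖q ℓ‖ ^ 2)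
        ≤ ((Finset.univ : Finset (Fin m)).powersetCard t).card • M :=
          Finset.sum_le_card_nsmul _ _ _ (fun U hU => hTmax U hU)
      _ = (((Finset.univ : Finset (Fin m)).powersetCard t).card : ℝ) * M := by
          rw [nsmul_eq_mul]
      _ ≤ (2:ℝ)^m * M := by
          refine mul_le_mul_of_nonneg_right ?_ (hprodnn T)
          have hc : ((Finset.univ : Finset (Fin m)).powersetCard t).card ≤ 2^m := by
            calc ((Finset.univ : Finset (Fin m)).powersetCard t).card
                ≤ (Finset.univ : Finset (Fin m)).powerset.card :=
                  Finset.card_le_card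
                    (fun U hU => Finset.mem_powerset.2 (Finset.mem_powersetCard.1 hU).1)
              _ = 2^m := by simp [Finset.card_powerset]
          exact_mod_cast hc
  -- a^(2(j-k)) * M ≤ ∏_S ≤ h_s
  have hSM : a ^ (2 * (j - k)) * M ≤ ∏ ℓ ∈ S, ‖q ℓ‖ ^ 2 := by
    have hsplit : (∏ ℓ ∈ S \ T, ‖q ℓ‖ ^ 2) * M
        = ∏ ℓ ∈ S, ‖q ℓ‖ ^ 2 := Finset.prod_sdiff hTS
    have hcard : (S \ T).card = j - k := by
      rw [Finset.card_sdiff_of_subset hTS, hScard, hTcard, hst]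
    have hpow : a ^ (2 * (j - k)) ≤ ∏ ℓ ∈ S \ T, ‖q ℓ‖ ^ 2 := by
      calc a ^ (2 * (j - k)) = (a ^ 2) ^ (j - k) := by rw [pow_mul]
        _ = ∏ _ℓ ∈ S \ T, a ^ 2 := by rw [Finset.prod_const, hcard]
        _ ≤ ∏ ℓ ∈ S \ T, ‖q ℓ‖ ^ 2 :=
            Finset.prod_le_prod (fun ℓ _ => by positivity) (fun ℓ _ => haq ℓ)
    rw [← hsplit]
    exact mul_le_mul_of_nonneg_right hpow (hprodnn T)
  have hhs : (∏ ℓ ∈ S, ‖q ℓ‖ ^ 2) ≤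
      ∑ U ∈ (Finset.univ : Finset (Fin m)).powersetCard s,
        ∏ ℓ ∈ U, ‖q ℓ‖ ^ 2 :=
    Finset.single_le_sum (fun U _ => hprodnn U)
      (Finset.mem_powersetCard.2 ⟨Finset.subset_univ S, hScard⟩)
  calc ((2:ℝ)^m)⁻¹ * a ^ (2 * (j - k)) *
      (∑ U ∈ (Finset.univ : Finset (Fin m)).powersetCard t,
        ∏ ℓ ∈ U, ‖q ℓ‖ ^ 2)
      ≤ ((2:ℝ)^m)⁻¹ * a ^ (2 * (j - k)) * ((2:ℝ)^m * M) := by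
        refine mul_le_mul_of_nonneg_left hht (by positivity)
    _ = a ^ (2 * (j - k)) * M := by field_simp
    _ ≤ ∏ ℓ ∈ S, ‖q ℓ‖ ^ 2 := hSM
    _ ≤ _ := hhs
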